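/- Conversely, if C ⊆ F_q^{n×m} has two distinct codewords X, X' with rank(X − X') ≤ 2t, then there exist a full-rank A ∈ F_q^{n×n}, and matrices D, D' ∈ F_q^{n×t}, Z, Z' ∈ F_q^{t×m} such that AX + DZ = AX' + D'Z'; i.e., zero-error decoding under t errors for all feasible transfer matrices forces minimum rank distance at least 2t+1. -/

import Mathlib

open Module Matrix

/-- Rank factorization: a matrix of rank at most `K` factors through `Fin K`. -/
lemma rank_factorization {F : Type*} [Field F] {n m K : ℕ}
    (M : Matrix (Fin n) (Fin m) F) (h : M.rank ≤ K) :
    ∃ (B : Matrix (Fin n) (Fin K) F) (C : Matrix (Fin K) (Fin m) F), M = B * C := by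
  set V : Submodule F (Fin n → F) := Submodule.span F (Set.range Mᵀ) with hV
  have hfin : M.rank = Module.finrank F V := Matrix.rank_eq_finrank_span_cols M
  set r := Module.finrank F V with hr
  have hrK : r ≤ K := hfin ▸ h
  let b : Basis (Fin r) F V := Module.finBasis F V
  have hcol : ∀ j, Mᵀ j ∈ V := fun j => Submodule.subset_span ⟨j, rfl⟩
  refine ⟨fun i k => if hk : (k : ℕ) < r then ((b ⟨k, hk⟩ : V) : Fin n → F) i else 0,
    fun k j => if hk : (k : ℕ) < r then b.repr ⟨Mᵀ j, hcol j⟩ ⟨k, hk⟩ else 0, ?_⟩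
  ext i j
  symm
  change (∑ k : Fin K,
      (if hk : (k : ℕ) < r then ((b ⟨k, hk⟩ : V) : Fin n → F) i else 0) *
      (if hk : (k : ℕ) < r then b.repr ⟨Mᵀ j, hcol j⟩ ⟨k, hk⟩ else 0)) = M i j
  have key : (∑ k : Fin K,
      (if hk : (k : ℕ) < r then ((b ⟨k, hk⟩ : V) : Fin n → F) i else 0) *
      (if hk : (k : ℕ) < r then b.repr ⟨Mᵀ j, hcol j⟩ ⟨k, hk⟩ else 0))
      = ∑ k : Fin r, ((b k : V) : Fin n → F) i * b.repr ⟨Mᵀ j, hcol j⟩ k := by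
    set f : Fin K → F := fun k =>
      (if hk : (k : ℕ) < r then ((b ⟨k, hk⟩ : V) : Fin n → F) i else 0) *
      (if hk : (k : ℕ) < r then b.repr ⟨Mᵀ j, hcol j⟩ ⟨k, hk⟩ else 0) with hf
    calc ∑ k : Fin K, f k
        = ∑ k ∈ Finset.univ.map (Fin.castLEEmb hrK), f k := by
          refine (Finset.sum_subset (Finset.subset_univ _) ?_).symm
          intro k _ hk
          have hlt : ¬ (k : ℕ) < r := fun hlt =>
            hk (Finset.mem_map.mpr ⟨⟨k, hlt⟩, Finset.mem_univ _, by
              simp [Fin.castLEEmb, Fin.castLE]⟩)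
          simp [hf, hlt]
      _ = ∑ k : Fin r, f (Fin.castLEEmb hrK k) := Finset.sum_map _ _ _
      _ = ∑ k : Fin r, ((b k : V) : Fin n → F) i * b.repr ⟨Mᵀ j, hcol j⟩ k := by
          refine Finset.sum_congr rfl fun k _ => ?_
          have hk : ((Fin.castLE hrK k : Fin K) : ℕ) < r := k.isLt
          have hkk : (⟨((Fin.castLE hrK k : Fin K) : ℕ), hk⟩ : Fin r) = k := by
            ext; simp
          simp only [hf, Fin.castLEEmb_apply, dif_pos hk, hkk]
  rw [key]
  have hval : ((∑ k : Fin r, b.repr ⟨Mᵀ j, hcol j⟩ k • b k : V) : Fin n → F) = Mᵀ j := by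
    rw [b.sum_repr ⟨Mᵀ j, hcol j⟩]
  calc (∑ k : Fin r, ((b k : V) : Fin n → F) i * b.repr ⟨Mᵀ j, hcol j⟩ k)
      = ((∑ k : Fin r, b.repr ⟨Mᵀ j, hcol j⟩ k • b k : V) : Fin n → F) i := by
        rw [Submodule.coe_sum, Finset.sum_apply]
        exact Finset.sum_congr rfl fun k _ => by
          simp [Submodule.coe_smul, mul_comm]
    _ = M i j := by rw [hval]; rfl

/-- Conversely, if `C` contains two distinct codewords at rank distance at most
`2t`, then there exist a full-rank (invertible) `A` and error matrices
`D, D', Z, Z'` such that `AX + DZ = AX' + D'Z'`: zero-error decoding under `t`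
errors for all feasible transfer matrices forces minimum rank distance `≥ 2t+1`. -/
theorem confusable_codewords_of_small_rank_distance {F : Type*} [Field F] [Fintype F]
    {n m t : ℕ} (ht : 1 ≤ t)
    (C : Set (Matrix (Fin n) (Fin m) F))
    {X X' : Matrix (Fin n) (Fin m) F} (hX : X ∈ C) (hX' : X' ∈ C) (hne : X ≠ X')
    (hrank : (X - X').rank ≤ 2 * t) :
    ∃ A : Matrix (Fin n) (Fin n) F, IsUnit A ∧
      ∃ (D D' : Matrix (Fin n) (Fin t) F) (Z Z' : Matrix (Fin t) (Fin m) F),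
        A * X + D * Z = A * X' + D' * Z' := by
  obtain ⟨B, Cm, hBC⟩ := rank_factorization (X - X') hrank
  -- reindex Fin (2*t) as Fin (t+t)
  let e : Fin (t + t) ≃ Fin (2 * t) := finCongr (two_mul t).symm
  refine ⟨1, isUnit_one, fun i k => - B i (e (Fin.natAdd t k)),
    fun i k => B i (e (Fin.castAdd t k)),
    fun k j => Cm (e (Fin.natAdd t k)) j,
    fun k j => Cm (e (Fin.castAdd t k)) j, ?_⟩
  have hsplit : ∀ i j, (X - X') i j =
      (∑ k : Fin t, B i (e (Fin.castAdd t k)) * Cm (e (Fin.castAdd t k)) j)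
      + ∑ k : Fin t, B i (e (Fin.natAdd t k)) * Cm (e (Fin.natAdd t k)) j := by
    intro i j
    rw [hBC, Matrix.mul_apply, ← Fin.sum_univ_add (fun k : Fin (t + t) => B i (e k) * Cm (e k) j)]
    exact Fintype.sum_equiv e _ _ (fun k => rfl) |>.symm
  ext i j
  have h := hsplit i j
  simp only [Matrix.add_apply, Matrix.one_mul, Matrix.mul_apply, Matrix.sub_apply] at h ⊢
  have : ∑ k : Fin t, (- B i (e (Fin.natAdd t k))) * Cm (e (Fin.natAdd t k)) j
      = - ∑ k : Fin t, B i (e (Fin.natAdd t k)) * Cm (e (Fin.natAdd t k)) j := by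
    simp [Finset.sum_neg_distrib]
  change X i j + ∑ k : Fin t, (- B i (e (Fin.natAdd t k))) * Cm (e (Fin.natAdd t k)) j
      = X' i j + ∑ k : Fin t, B i (e (Fin.castAdd t k)) * Cm (e (Fin.castAdd t k)) j
  rw [this]
  linear_combination h
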